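/- Let p(s) = s^5 + α1·s^4 + α2·s^3 + α3·s^2 + α4·s + α5 be a monic real polynomial with αi > 0 for i = 1, ..., 5 and Δ2 = α1·α2 - α3 > 0. If p is Hurwitz stable (all complex roots of p have negative real part), then α2² - 4·α4 > 0. -/

import Mathlib

open Polynomial

lemma aux_cubic_root (g1 g2 g3 : ℝ) (hg3 : 0 < g3) :
    ∃ x : ℝ, x < 0 ∧ x^3 + g1*x^2 + g2*x + g3 = 0 := by
  set f : ℝ → ℝ := fun x => x^3 + g1*x^2 + g2*x + g3 with hf
  set M : ℝ := 1 + |g1| + |g2| + |g3| with hM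
  have hM1 : 1 ≤ M := by
    have := abs_nonneg g1; have := abs_nonneg g2; have := abs_nonneg g3; linarith
  have hM0 : (0:ℝ) < M := by linarith
  have hMsq : M ≤ M^2 := by nlinarith
  have hfM : f (-M) < 0 := by
    have h1 : g1 ≤ |g1| := le_abs_self g1
    have h2 : -g2 ≤ |g2| := neg_le_abs g2
    have h3 : g3 ≤ |g3| := le_abs_self g3
    have e1 : g1 * M^2 ≤ |g1| * M^2 := by nlinarith
    have e2 : -(g2 * M) ≤ |g2| * M^2 := by nlinarith [neg_le_abs g2, abs_nonneg g2]
    have e3 : g3 ≤ |g3| * M^2 := by nlinarith [abs_nonneg g3]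
    have : f (-M) = -(M^3) + g1*M^2 - g2*M + g3 := by simp [hf]; ring
    rw [this]
    nlinarith [hMsq, abs_nonneg g1, abs_nonneg g2, abs_nonneg g3]
  have hf0 : 0 < f 0 := by simp [hf]; linarith
  have hcont : ContinuousOn f (Set.Icc (-M) 0) := by fun_prop
  have hiv := intermediate_value_Icc (by linarith : -M ≤ (0:ℝ)) hcont
  obtain ⟨x, hx, hfx⟩ := hiv ⟨hfM.le, hf0.le⟩
  refine ⟨x, ?_, hfx⟩
  rcases lt_or_eq_of_le hx.2 with h | h
  · exact h
  · exfalso; rw [h] at hfx; rw [hfx] at hf0; exact lt_irrefl 0 hf0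

lemma aux_quintic_root (g1 g2 g3 g4 g5 : ℝ) (hg5 : 0 < g5) :
    ∃ x : ℝ, x < 0 ∧ x^5 + g1*x^4 + g2*x^3 + g3*x^2 + g4*x + g5 = 0 := by
  set f : ℝ → ℝ := fun x => x^5 + g1*x^4 + g2*x^3 + g3*x^2 + g4*x + g5 with hf
  set M : ℝ := 1 + |g1| + |g2| + |g3| + |g4| + |g5| with hM
  have hM1 : 1 ≤ M := by
    have := abs_nonneg g1; have := abs_nonneg g2; have := abs_nonneg g3
    have := abs_nonneg g4; have := abs_nonneg g5; linarith
  have hM0 : (0:ℝ) < M := by linarith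
  have p2 : M ≤ M^2 := by nlinarith
  have p3 : M^2 ≤ M^3 := by nlinarith
  have p4 : M^3 ≤ M^4 := by nlinarith
  have hfM : f (-M) < 0 := by
    have e1 : g1 * M^4 ≤ |g1| * M^4 := by nlinarith [le_abs_self g1]
    have e2 : -(g2 * M^3) ≤ |g2| * M^4 := by linarith [neg_le_abs g2, abs_nonneg g2, mul_le_mul_of_nonneg_right (neg_le_abs g2) (pow_pos hM0 3).le, mul_le_mul_of_nonneg_left p4 (abs_nonneg g2)]
    have e3 : g3 * M^2 ≤ |g3| * M^4 := by linarith [le_abs_self g3, abs_nonneg g3, mul_le_mul_of_nonneg_right (le_abs_self g3) (pow_pos hM0 2).le, mul_le_mul_of_nonneg_left (p3.trans p4) (abs_nonneg g3)]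
    have e4 : -(g4 * M) ≤ |g4| * M^4 := by linarith [neg_le_abs g4, abs_nonneg g4, mul_le_mul_of_nonneg_right (neg_le_abs g4) hM0.le, mul_le_mul_of_nonneg_left (p2.trans (p3.trans p4)) (abs_nonneg g4)]
    have e5 : g5 ≤ |g5| * M^4 := by linarith [le_abs_self g5, abs_nonneg g5, mul_le_mul_of_nonneg_left (hM1.trans (p2.trans (p3.trans p4))) (abs_nonneg g5)]
    have : f (-M) = -(M^5) + g1*M^4 - g2*M^3 + g3*M^2 - g4*M + g5 := by simp [hf]; ring
    rw [this]
    linarith [abs_nonneg g1, abs_nonneg g2, abs_nonneg g3, abs_nonneg g4, abs_nonneg g5, pow_pos hM0 4, (by rw [hM]; ring : M^5 = M^4 + |g1| * M^4 + |g2| * M^4 + |g3| * M^4 + |g4| * M^4 + |g5| * M^4)]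
  have hf0 : 0 < f 0 := by simp [hf]; linarith
  have hcont : ContinuousOn f (Set.Icc (-M) 0) := by fun_prop
  have hiv := intermediate_value_Icc (by linarith : -M ≤ (0:ℝ)) hcont
  obtain ⟨x, hx, hfx⟩ := hiv ⟨hfM.le, hf0.le⟩
  refine ⟨x, ?_, hfx⟩
  rcases lt_or_eq_of_le hx.2 with h | h
  · exact h
  · exfalso; rw [h] at hfx; rw [hfx] at hf0; exact lt_irrefl 0 hf0

lemma aux_div5 (g1 g2 g3 g4 g5 r : ℝ)
    (h : r^5 + g1*r^4 + g2*r^3 + g3*r^2 + g4*r + g5 = 0) (z : ℂ) :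
    z^5 + g1*z^4 + g2*z^3 + g3*z^2 + g4*z + g5
      = (z - r) * (z^4 + ((g1+r : ℝ):ℂ)*z^3 + ((g2+r*(g1+r) : ℝ):ℂ)*z^2
          + ((g3+r*(g2+r*(g1+r)) : ℝ):ℂ)*z + ((g4+r*(g3+r*(g2+r*(g1+r))) : ℝ):ℂ)) := by
  have hC : (r:ℂ)^5 + g1*r^4 + g2*r^3 + g3*r^2 + g4*r + g5 = 0 := by exact_mod_cast h
  push_cast
  linear_combination hC

lemma aux_div4 (g1 g2 g3 g4 r : ℝ)
    (h : r^4 + g1*r^3 + g2*r^2 + g3*r + g4 = 0) (z : ℂ) :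
    z^4 + g1*z^3 + g2*z^2 + g3*z + g4
      = (z - r) * (z^3 + ((g1+r : ℝ):ℂ)*z^2 + ((g2+r*(g1+r) : ℝ):ℂ)*z
          + ((g3+r*(g2+r*(g1+r)) : ℝ):ℂ)) := by
  have hC : (r:ℂ)^4 + g1*r^3 + g2*r^2 + g3*r + g4 = 0 := by exact_mod_cast h
  push_cast
  linear_combination hC

lemma aux_div3 (g1 g2 g3 r : ℝ)
    (h : r^3 + g1*r^2 + g2*r + g3 = 0) (z : ℂ) :
    z^3 + g1*z^2 + g2*z + g3
      = (z - r) * (z^2 + ((g1+r : ℝ):ℂ)*z + ((g2+r*(g1+r) : ℝ):ℂ)) := by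
  have hC : (r:ℂ)^3 + g1*r^2 + g2*r + g3 = 0 := by exact_mod_cast h
  push_cast
  linear_combination hC

lemma aux_root4 (g1 g2 g3 g4 : ℝ) :
    ∃ w : ℂ, w^4 + g1*w^3 + g2*w^2 + g3*w + g4 = 0 := by
  have hdeg : (X^4 + C (g1:ℂ)*X^3 + C (g2:ℂ)*X^2 + C (g3:ℂ)*X + C (g4:ℂ)).degree = 4 := by
    compute_degree!
  obtain ⟨w, hw⟩ := Complex.exists_root (by rw [hdeg]; norm_num)
  refine ⟨w, ?_⟩
  simpa only [IsRoot, eval_add, eval_mul, eval_pow, eval_X, eval_C] using hw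

lemma aux_root2 (p q : ℝ) :
    ∃ w : ℂ, w^2 + p*w + q = 0 := by
  have hdeg : (X^2 + C (p:ℂ)*X + C (q:ℂ)).degree = 2 := by
    compute_degree!
  obtain ⟨w, hw⟩ := Complex.exists_root (by rw [hdeg]; norm_num)
  refine ⟨w, ?_⟩
  simpa only [IsRoot, eval_add, eval_mul, eval_pow, eval_X, eval_C] using hw

lemma aux_self_quad (w : ℂ) :
    w^2 + ((-(2*w.re) : ℝ):ℂ)*w + ((Complex.normSq w : ℝ):ℂ) = 0 := by
  have hadd := Complex.add_conj w
  have hmul := Complex.mul_conj w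
  push_cast at hadd ⊢
  linear_combination w*hadd - hmul

lemma aux_quad_div (g1 g2 g3 g4 b c : ℝ) (w : ℂ) (hwne : w - (starRingEnd ℂ) w ≠ 0)
    (hw : w^4 + g1*w^3 + g2*w^2 + g3*w + g4 = 0)
    (hwbar : ((starRingEnd ℂ) w)^4 + g1*((starRingEnd ℂ) w)^3 + g2*((starRingEnd ℂ) w)^2
      + g3*((starRingEnd ℂ) w) + g4 = 0)
    (hqw : w^2 + (b:ℂ)*w + (c:ℂ) = 0)
    (hqwbar : ((starRingEnd ℂ) w)^2 + (b:ℂ)*((starRingEnd ℂ) w) + (c:ℂ) = 0) :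
    ∀ z : ℂ, z^4 + g1*z^3 + g2*z^2 + g3*z + g4
      = (z^2 + b*z + c) * (z^2 + ((g1-b : ℝ):ℂ)*z + ((g2-c-b*(g1-b) : ℝ):ℂ)) := by
  have hEw : ((g3 - (b*(g2-c-b*(g1-b)) + c*(g1-b)) : ℝ):ℂ)*w
      + ((g4 - c*(g2-c-b*(g1-b)) : ℝ):ℂ) = 0 := by
    push_cast
    linear_combination hw - (w^2 + ((g1:ℂ)-b)*w + ((g2:ℂ)-c-b*((g1:ℂ)-b)))*hqw
  have hEwbar : ((g3 - (b*(g2-c-b*(g1-b)) + c*(g1-b)) : ℝ):ℂ)*((starRingEnd ℂ) w)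
      + ((g4 - c*(g2-c-b*(g1-b)) : ℝ):ℂ) = 0 := by
    push_cast
    linear_combination hwbar - (((starRingEnd ℂ) w)^2 + ((g1:ℂ)-b)*((starRingEnd ℂ) w)
      + ((g2:ℂ)-c-b*((g1:ℂ)-b)))*hqwbar
  have hsub : ((g3 - (b*(g2-c-b*(g1-b)) + c*(g1-b)) : ℝ):ℂ) * (w - (starRingEnd ℂ) w) = 0 := by
    linear_combination hEw - hEwbar
  have he1 : ((g3 - (b*(g2-c-b*(g1-b)) + c*(g1-b)) : ℝ):ℂ) = 0 := by
    rcases mul_eq_zero.mp hsub with h | h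
    · exact h
    · exact absurd h hwne
  have he0 : ((g4 - c*(g2-c-b*(g1-b)) : ℝ):ℂ) = 0 := by
    rw [he1] at hEw; simpa using hEw
  intro z
  push_cast at he1 he0 ⊢
  linear_combination z*he1 + he0

lemma aux_final (α1 α2 α3 α4 α5 a b1 c1 b2 c2 : ℝ)
    (ha : a < 0) (hb1 : 0 < b1) (hc1 : 0 < c1) (hb2 : 0 < b2) (hc2 : 0 < c2)
    (hfac : ∀ x : ℝ, x^5 + α1*x^4 + α2*x^3 + α3*x^2 + α4*x + α5
      = (x - a) * (x^2 + b1*x + c1) * (x^2 + b2*x + c2)) :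
    0 < α2^2 - 4*α4 := by
  set A : ℝ := -a with hA
  have hA0 : 0 < A := by simp [hA]; linarith
  have h0 := hfac 0
  have h1 := hfac 1
  have hm1 := hfac (-1)
  have h2 := hfac 2
  have hm2 := hfac (-2)
  have hα2 : α2 = c1 + c2 + b1*b2 + A*(b1+b2) := by
    linear_combination (1/12)*h2 - (1/12)*hm2 - (1/6)*h1 + (1/6)*hm1
  have hα4 : α4 = c1*c2 + A*(b1*c2 + b2*c1) := by
    linear_combination (2/3)*h1 - (2/3)*hm1 - (1/12)*h2 + (1/12)*hm2
  have key : α2^2 - 4*α4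
      = (c1 - c2 + A*(b1-b2))^2 + 2*(c1+c2)*(b1*b2) + (b1*b2 + 2*A*b1)*(b1*b2 + 2*A*b2) := by
    rw [hα2, hα4]; ring
  rw [key]
  have t1 := sq_nonneg (c1 - c2 + A*(b1-b2))
  have t2 : 0 < 2*(c1+c2)*(b1*b2) := by positivity
  have t3 : 0 < (b1*b2 + 2*A*b1)*(b1*b2 + 2*A*b2) := by positivity
  linarith

theorem necessary_cond_stable_deg5 (α1 α2 α3 α4 α5 : ℝ)
    (h1 : 0 < α1) (h2 : 0 < α2) (h3 : 0 < α3) (h4 : 0 < α4) (h5 : 0 < α5)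
    (hΔ2 : 0 < α1 * α2 - α3)
    (hstable : ∀ z : ℂ, aeval z (X ^ 5 + C α1 * X ^ 4 + C α2 * X ^ 3 + C α3 * X ^ 2
        + C α4 * X + C α5) = 0 → z.re < 0) :
    0 < α2 ^ 2 - 4 * α4 := by
  have hs : ∀ z : ℂ, z^5 + α1*z^4 + α2*z^3 + α3*z^2 + α4*z + α5 = 0 → z.re < 0 := by
    intro z hz
    apply hstable z
    simp only [map_add, map_mul, map_pow, aeval_X, aeval_C, Complex.coe_algebraMap]
    exact hz
  -- real root a < 0
  obtain ⟨a, ha0, ha⟩ := aux_quintic_root α1 α2 α3 α4 α5 h5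
  have hquot := aux_div5 α1 α2 α3 α4 α5 a ha
  obtain ⟨β1, hβ1⟩ : ∃ t : ℝ, t = α1 + a := ⟨_, rfl⟩
  simp only [← hβ1] at hquot
  obtain ⟨β2, hβ2⟩ : ∃ t : ℝ, t = α2 + a*β1 := ⟨_, rfl⟩
  simp only [← hβ2] at hquot
  obtain ⟨β3, hβ3⟩ : ∃ t : ℝ, t = α3 + a*β2 := ⟨_, rfl⟩
  simp only [← hβ3] at hquot
  obtain ⟨β4, hβ4⟩ : ∃ t : ℝ, t = α4 + a*β3 := ⟨_, rfl⟩
  simp only [← hβ4] at hquot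
  have hrel : a*β4 + α5 = 0 := by
    rw [hβ4, hβ3, hβ2, hβ1]; linear_combination ha
  have hβ4pos : 0 < β4 := by
    rcases le_or_gt β4 0 with h | h
    · nlinarith [mul_nonneg (neg_nonneg.mpr ha0.le) (neg_nonneg.mpr h)]
    · exact h
  have hq4 : ∀ z : ℂ, z^4 + β1*z^3 + β2*z^2 + β3*z + β4 = 0 → z.re < 0 := by
    intro z h
    exact hs z (by rw [hquot z, h, mul_zero])
  obtain ⟨w, hw⟩ := aux_root4 β1 β2 β3 β4
  by_cases him : w.im = 0
  · -- Case A: w is real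
    have hwr : w = (w.re : ℂ) := Complex.ext (by simp) (by simp [him])
    set r : ℝ := w.re with hrdef
    have hr : r^4 + β1*r^3 + β2*r^2 + β3*r + β4 = 0 := by
      rw [hwr] at hw; exact_mod_cast hw
    have hrneg : r < 0 := hq4 w hw
    have hquot2 := aux_div4 β1 β2 β3 β4 r hr
    obtain ⟨γ1, hγ1⟩ : ∃ t : ℝ, t = β1 + r := ⟨_, rfl⟩
    simp only [← hγ1] at hquot2
    obtain ⟨γ2, hγ2⟩ : ∃ t : ℝ, t = β2 + r*γ1 := ⟨_, rfl⟩
    simp only [← hγ2] at hquot2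
    obtain ⟨γ3, hγ3⟩ : ∃ t : ℝ, t = β3 + r*γ2 := ⟨_, rfl⟩
    simp only [← hγ3] at hquot2
    have hrel2 : r*γ3 + β4 = 0 := by
      rw [hγ3, hγ2, hγ1]; linear_combination hr
    have hγ3pos : 0 < γ3 := by
      rcases le_or_gt γ3 0 with h | h
      · nlinarith [mul_nonneg (neg_nonneg.mpr hrneg.le) (neg_nonneg.mpr h)]
      · exact h
    have hq3 : ∀ z : ℂ, z^3 + γ1*z^2 + γ2*z + γ3 = 0 → z.re < 0 := by
      intro z h
      exact hq4 z (by rw [hquot2 z, h, mul_zero])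
    obtain ⟨r2, hr2neg, hr2⟩ := aux_cubic_root γ1 γ2 γ3 hγ3pos
    have hquot3 := aux_div3 γ1 γ2 γ3 r2 hr2
    obtain ⟨δ1, hδ1⟩ : ∃ t : ℝ, t = γ1 + r2 := ⟨_, rfl⟩
    simp only [← hδ1] at hquot3
    obtain ⟨δ2, hδ2⟩ : ∃ t : ℝ, t = γ2 + r2*δ1 := ⟨_, rfl⟩
    simp only [← hδ2] at hquot3
    have hrel3 : r2*δ2 + γ3 = 0 := by
      rw [hδ2, hδ1]; linear_combination hr2
    have hδ2pos : 0 < δ2 := by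
      rcases le_or_gt δ2 0 with h | h
      · nlinarith [mul_nonneg (neg_nonneg.mpr hr2neg.le) (neg_nonneg.mpr h)]
      · exact h
    have hq2 : ∀ z : ℂ, z^2 + δ1*z + δ2 = 0 → z.re < 0 := by
      intro z h
      exact hq3 z (by rw [hquot3 z, h, mul_zero])
    -- δ1 > 0 via the two roots of the quadratic
    obtain ⟨u, hu⟩ := aux_root2 δ1 δ2
    have hure : u.re < 0 := hq2 u hu
    have hv : (-(δ1:ℂ) - u)^2 + δ1*(-(δ1:ℂ) - u) + δ2 = 0 := by linear_combination hu
    have hvre : (-(δ1:ℂ) - u).re < 0 := hq2 _ hv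
    have hvre' : -δ1 - u.re < 0 := by simpa using hvre
    have hδ1pos : 0 < δ1 := by linarith
    -- final factorization
    refine aux_final α1 α2 α3 α4 α5 a (-(r+r2)) (r*r2) δ1 δ2 ha0 (by linarith)
      (mul_pos_of_neg_of_neg hrneg hr2neg) hδ1pos hδ2pos ?_
    intro x
    apply Complex.ofReal_injective
    push_cast
    rw [hquot (x:ℂ), hquot2 (x:ℂ), hquot3 (x:ℂ)]
    ring
  · -- Case B: w is not real
    have hwbar : ((starRingEnd ℂ) w)^4 + β1*((starRingEnd ℂ) w)^3 + β2*((starRingEnd ℂ) w)^2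
        + β3*((starRingEnd ℂ) w) + β4 = 0 := by
      have := congrArg (starRingEnd ℂ) hw
      simpa [map_add, map_mul, map_pow, Complex.conj_ofReal] using this
    have hwne : w - (starRingEnd ℂ) w ≠ 0 := by
      rw [Complex.sub_conj]
      simp [Complex.ext_iff, him]
    have hqw := aux_self_quad w
    have hqwbar : ((starRingEnd ℂ) w)^2 + ((-(2*w.re) : ℝ):ℂ)*((starRingEnd ℂ) w)
        + ((Complex.normSq w : ℝ):ℂ) = 0 := by
      have := aux_self_quad ((starRingEnd ℂ) w)
      simpa [Complex.normSq_conj] using this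
    have hquot2 := aux_quad_div β1 β2 β3 β4 (-(2*w.re)) (Complex.normSq w) w hwne hw hwbar hqw hqwbar
    set b1 : ℝ := -(2*w.re) with hb1def
    set c1 : ℝ := Complex.normSq w with hc1def
    obtain ⟨δ1, hδ1⟩ : ∃ t : ℝ, t = β1 - b1 := ⟨_, rfl⟩
    simp only [← hδ1] at hquot2
    obtain ⟨δ2, hδ2⟩ : ∃ t : ℝ, t = β2 - c1 - b1*δ1 := ⟨_, rfl⟩
    simp only [← hδ2] at hquot2
    have hb1pos : 0 < b1 := by
      have := hq4 w hw
      rw [hb1def]; linarith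
    have hwne0 : w ≠ 0 := by
      intro h0
      rw [h0] at hw
      simp at hw
      nlinarith
    have hc1pos : 0 < c1 := by
      rw [hc1def]; exact Complex.normSq_pos.mpr hwne0
    have hq2 : ∀ z : ℂ, z^2 + δ1*z + δ2 = 0 → z.re < 0 := by
      intro z h
      exact hq4 z (by rw [hquot2 z, h, mul_zero])
    obtain ⟨u, hu⟩ := aux_root2 δ1 δ2
    have hure : u.re < 0 := hq2 u hu
    have hv : (-(δ1:ℂ) - u)^2 + δ1*(-(δ1:ℂ) - u) + δ2 = 0 := by linear_combination hu
    have hvre' : -δ1 - u.re < 0 := by simpa using hq2 _ hv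
    have hδ1pos : 0 < δ1 := by linarith
    have hfacR : ∀ x : ℝ, x^5 + α1*x^4 + α2*x^3 + α3*x^2 + α4*x + α5
        = (x - a) * (x^2 + b1*x + c1) * (x^2 + δ1*x + δ2) := by
      intro x
      apply Complex.ofReal_injective
      push_cast
      rw [hquot (x:ℂ), hquot2 (x:ℂ)]
      ring
    have hδ2pos : 0 < δ2 := by
      have h0 := hfacR 0
      have hA : 0 < -a := by linarith
      rcases le_or_gt δ2 0 with h | h
      · nlinarith [mul_pos hA hc1pos]
      · exact h
    exact aux_final α1 α2 α3 α4 α5 a b1 c1 δ1 δ2 ha0 hb1pos hc1pos hδ1pos hδ2pos hfacR
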